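/- Let (N₁, ⊴₁, c₁) and (N₂, ⊴₂, c₂) be MinBudget instances on disjoint job sets with schedules S¹ and S² in increasing irreducible structure. Then the concatenation S¹ ⊕ S² is an optimal (minimum-budget) schedule of the series composition (N₁ ∪ N₂, ⊴₁ * ⊴₂, c₁ ∪ c₂). -/

import Mathlib

open List

variable {ι : Type*} [DecidableEq ι]

/-- Total cost of a schedule (list of jobs). -/
def listCost (c : ι → ℝ) (S : List ι) : ℝ := (S.map c).sum

/-- Budget of a schedule: maximum cost of a prefix (the empty prefix has cost 0). -/
def listBudget (c : ι → ℝ) : List ι → ℝ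
  | [] => 0
  | j :: t => max 0 (c j + listBudget c t)

/-- Return of a schedule. -/
def listReturn (c : ι → ℝ) (S : List ι) : ℝ := listCost c S - listBudget c S

/-- `S` enumerates the finite job set `N` without repetition. -/
def IsScheduleOf (N : Finset ι) (S : List ι) : Prop :=
  S.Nodup ∧ ∀ j, j ∈ S ↔ j ∈ N

/-- `S` is a linear extension of the precedence relation `r` (restricted to its jobs). -/
def RespectsOrder (r : ι → ι → Prop) (S : List ι) : Prop :=
  ∀ i j, r i j → i ∈ S → j ∈ S → S.idxOf i ≤ S.idxOf j

/-- Minimum budget over all feasible schedules of the job set `X`. -/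
noncomputable def setBudget (r : ι → ι → Prop) (c : ι → ℝ) (X : Finset ι) : ℝ :=
  sInf {b | ∃ S : List ι, IsScheduleOf X S ∧ RespectsOrder r S ∧ listBudget c S = b}

/-- Total cost of a job set. -/
def setCost (c : ι → ℝ) (X : Finset ι) : ℝ := ∑ j ∈ X, c j

/-- Return of a job set. -/
noncomputable def setReturn (r : ι → ι → Prop) (c : ι → ℝ) (X : Finset ι) : ℝ :=
  setCost c X - setBudget r c X

/-- The cbr-preorder on job sets. -/
def cbrLE (r : ι → ι → Prop) (c : ι → ℝ) (X Y : Finset ι) : Prop :=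
  (setCost c X < 0 ∧ 0 ≤ setCost c Y) ∨
  (setCost c X < 0 ∧ setCost c Y < 0 ∧ setBudget r c X < setBudget r c Y) ∨
  (setCost c X < 0 ∧ setCost c Y < 0 ∧ setBudget r c X = setBudget r c Y ∧
    setReturn r c X ≤ setReturn r c Y) ∨
  (0 ≤ setCost c X ∧ 0 ≤ setCost c Y ∧ setReturn r c X ≤ setReturn r c Y)

/-- `J` is an ideal (downward-closed subset) of `r` restricted to `I`. -/
def IsIdealIn (r : ι → ι → Prop) (I J : Finset ι) : Prop :=
  J ⊆ I ∧ ∀ j ∈ J, ∀ i ∈ I, r i j → i ∈ J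

/-- `F` is a filter (upward-closed subset) of `r` restricted to `I`. -/
def IsFilterIn (r : ι → ι → Prop) (I F : Finset ι) : Prop :=
  F ⊆ I ∧ ∀ i ∈ F, ∀ j ∈ I, r i j → j ∈ F

/-- `I` is an interval of `r` on `N`: intersection of an ideal and a filter. -/
def IsIntervalIn (r : ι → ι → Prop) (N I : Finset ι) : Prop :=
  ∃ J F, IsIdealIn r N J ∧ IsFilterIn r N F ∧ I = J ∩ F

/-- An irreducible interval: every ideal of the restricted order is `⪰` the interval. -/
def IsIrreducibleIn (r : ι → ι → Prop) (c : ι → ℝ) (N I : Finset ι) : Prop :=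
  IsIntervalIn r N I ∧ ∀ J, IsIdealIn r I J → cbrLE r c I J

/-- A schedule (given as blocks `SS`) in increasing irreducible structure. -/
def IncIrrStructure (r : ι → ι → Prop) (c : ι → ℝ) (N : Finset ι)
    (SS : List (List ι)) : Prop :=
  IsScheduleOf N SS.flatten ∧ RespectsOrder r SS.flatten ∧
  (∀ S ∈ SS, IsIrreducibleIn r c N S.toFinset ∧ RespectsOrder r S ∧
    listBudget c S = setBudget r c S.toFinset) ∧
  ∀ i j : Fin SS.length, i < j → cbrLE r c (SS.get i).toFinset (SS.get j).toFinset

/-- The series composition of two partial orders on disjoint job sets. -/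
def seriesRel (r1 r2 : ι → ι → Prop) (N1 N2 : Finset ι) : ι → ι → Prop :=
  fun i j => (i ∈ N1 ∧ j ∈ N1 ∧ r1 i j) ∨ (i ∈ N2 ∧ j ∈ N2 ∧ r2 i j) ∨ (i ∈ N1 ∧ j ∈ N2)

section Part1
variable (c : ι → ℝ)
set_option linter.unusedSectionVars false

@[simp] lemma listCost_nil : listCost c [] = 0 := rfl
@[simp] lemma listCost_cons (x : ι) (L : List ι) :
    listCost c (x :: L) = c x + listCost c L := by simp [listCost]
lemma listCost_append (A B : List ι) :
    listCost c (A ++ B) = listCost c A + listCost c B := by simp [listCost]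

@[simp] lemma listBudget_nil : listBudget c [] = 0 := rfl
lemma listBudget_cons (x : ι) (L : List ι) :
    listBudget c (x :: L) = max 0 (c x + listBudget c L) := rfl

lemma listBudget_nonneg (L : List ι) : 0 ≤ listBudget c L := by
  cases L with
  | nil => simp
  | cons x t => simp [listBudget_cons]

lemma listCost_le_listBudget (L : List ι) : listCost c L ≤ listBudget c L := by
  induction L with
  | nil => simp
  | cons x t ih =>
      simp only [listCost_cons, listBudget_cons, le_max_iff]
      right; linarith

lemma listBudget_append (A B : List ι) :
    listBudget c (A ++ B) = max (listBudget c A) (listCost c A + listBudget c B) := by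
  induction A with
  | nil => simp [listBudget_nonneg]
  | cons x t ih =>
      simp only [cons_append, listBudget_cons, ih, listCost_cons]
      have aux : ∀ a b d : ℝ, max 0 (a + max b d) = max (max 0 (a + b)) (a + d) := by
        intro a b d
        apply _root_.le_antisymm
        · apply max_le
          · exact le_max_of_le_left (le_max_left _ _)
          · rcases le_total b d with h | h
            · rw [max_eq_right h]; exact le_max_right _ _
            · rw [max_eq_left h]
              exact le_max_of_le_left (le_max_right _ _)
        · apply max_le
          · apply max_le (le_max_left _ _)
            exact le_max_of_le_right (by linarith [le_max_left b d])
          · exact le_max_of_le_right (by linarith [le_max_right b d])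
      rw [aux, ← add_assoc]

lemma prefix_cost_le_budget {T P Q : List ι} (h : T = P ++ Q) :
    listCost c P ≤ listBudget c T := by
  subst h
  rw [listBudget_append, le_max_iff]
  right
  have := listBudget_nonneg c Q
  linarith

lemma exists_peak (T : List ι) :
    ∃ P Q, T = P ++ Q ∧ listCost c P = listBudget c T := by
  induction T with
  | nil => exact ⟨[], [], rfl, rfl⟩
  | cons x t ih =>
      obtain ⟨P, Q, hPQ, hc⟩ := ih
      rcases le_or_gt (c x + listBudget c t) 0 with h | h
      · exact ⟨[], x :: t, rfl, by simp [listBudget_cons, max_eq_left h]⟩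
      · refine ⟨x :: P, Q, by simp [hPQ], ?_⟩
        simp [listBudget_cons, max_eq_right h.le, hc]

lemma budget_le_of_prefixes {T : List ι} {X : ℝ}
    (h : ∀ P Q, T = P ++ Q → listCost c P ≤ X) : listBudget c T ≤ X := by
  obtain ⟨P, Q, hPQ, hc⟩ := exists_peak c T
  rw [← hc]; exact h P Q hPQ

end Part1

section Part2
set_option linter.unusedSectionVars false
variable {r : ι → ι → Prop}

lemma idxOf_append_left {j : ι} {P Q : List ι} (h : j ∈ P) :
    (P ++ Q).idxOf j = P.idxOf j := by
  induction P with
  | nil => simp at h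
  | cons p P ih =>
      by_cases hj : p = j
      · subst hj; simp [List.idxOf_cons_self]
      · rw [cons_append, List.idxOf_cons_ne _ hj,
          List.idxOf_cons_ne _ hj, ih (by
            rcases mem_cons.mp h with h1 | h1
            · exact absurd h1.symm hj
            · exact h1)]

lemma idxOf_append_right {j : ι} {P Q : List ι} (h : j ∉ P) :
    (P ++ Q).idxOf j = P.length + Q.idxOf j := by
  induction P with
  | nil => simp
  | cons p P ih =>
      have hj : p ≠ j := fun hh => h (hh ▸ mem_cons_self)
      rw [cons_append, List.idxOf_cons_ne _ hj]
      simp only [length_cons]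
      rw [ih (fun hh => h (mem_cons_of_mem _ hh))]
      omega

lemma mem_take_idxOf {a : ι} {T : List ι} (h : a ∈ T) :
    a ∈ T.take (T.idxOf a + 1) := by
  induction T with
  | nil => simp at h
  | cons x t ih =>
      by_cases hx : x = a
      · subst hx; simp [List.idxOf_cons_self]
      · rw [List.idxOf_cons_ne _ hx]
        simp only [Nat.succ_eq_add_one, take_succ_cons, mem_cons]
        right
        exact ih (by rcases mem_cons.mp h with h1 | h1; exact absurd h1.symm hx; exact h1)

lemma idxOf_lt_of_mem_take {a : ι} {T : List ι} {n : ℕ} (h : a ∈ T.take n) :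
    T.idxOf a < n := by
  induction T generalizing n with
  | nil => simp at h
  | cons x t ih =>
      cases n with
      | zero => simp at h
      | succ m =>
          by_cases hx : x = a
          · subst hx; simp [List.idxOf_cons_self]
          · rw [List.idxOf_cons_ne _ hx]
            simp only [take_succ_cons, mem_cons] at h
            rcases h with h | h
            · exact absurd h.symm hx
            · exact Nat.succ_lt_succ (ih h)

lemma respectsOrder_iff_splits {T : List ι} (hN : T.Nodup) :
    RespectsOrder r T ↔ ∀ P Q, T = P ++ Q → ∀ j ∈ P, ∀ i ∈ Q, ¬ r i j := by
  constructor
  · intro hresp P Q hPQ j hj i hi hr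
    subst hPQ
    have hiP : i ∉ P := by
      intro hiP
      exact (List.disjoint_right.mp (nodup_append'.mp hN).2.2) hi hiP
    have h1 : (P ++ Q).idxOf i ≤ (P ++ Q).idxOf j :=
      hresp i j hr (mem_append_right _ hi) (mem_append_left _ hj)
    rw [idxOf_append_left hj, idxOf_append_right hiP] at h1
    have := List.idxOf_lt_length_iff.mpr hj
    omega
  · intro h i j hr hi hj
    by_contra hlt
    push_neg at hlt
    have hTsplit : T = T.take (T.idxOf j + 1) ++ T.drop (T.idxOf j + 1) :=
      (take_append_drop _ _).symm
    refine h _ _ hTsplit j (mem_take_idxOf hj) i ?_ hr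
    have hiT : i ∉ T.take (T.idxOf j + 1) := by
      intro hmem
      have := idxOf_lt_of_mem_take hmem
      omega
    rw [hTsplit] at hi
    rcases mem_append.mp hi with h1 | h1
    · exact absurd h1 hiT
    · exact h1

lemma resp_closed_left {T P Q : List ι} (hN : T.Nodup) (hresp : RespectsOrder r T)
    (hPQ : T = P ++ Q) {i j : ι} (hj : j ∈ P) (hr : r i j) (hi : i ∈ T) : i ∈ P := by
  rw [hPQ] at hi
  rcases mem_append.mp hi with h1 | h1
  · exact h1
  · exact absurd hr ((respectsOrder_iff_splits hN).mp hresp P Q hPQ j hj i h1)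

lemma resp_closed_right {T P Q : List ι} (hN : T.Nodup) (hresp : RespectsOrder r T)
    (hPQ : T = P ++ Q) {i j : ι} (hi : i ∈ Q) (hr : r i j) (hj : j ∈ T) : j ∈ Q := by
  rw [hPQ] at hj
  rcases mem_append.mp hj with h1 | h1
  · exact absurd hr ((respectsOrder_iff_splits hN).mp hresp P Q hPQ j h1 i hi)
  · exact h1

lemma resp_of_prefix {P Q : List ι} (hN : (P ++ Q).Nodup)
    (hresp : RespectsOrder r (P ++ Q)) : RespectsOrder r P := by
  rw [respectsOrder_iff_splits (nodup_append'.mp hN).1]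
  intro A B hAB j hj i hi
  exact (respectsOrder_iff_splits hN).mp hresp A (B ++ Q)
    (by rw [hAB, append_assoc]) j hj i (mem_append_left _ hi)

lemma resp_of_suffix {P Q : List ι} (hN : (P ++ Q).Nodup)
    (hresp : RespectsOrder r (P ++ Q)) : RespectsOrder r Q := by
  rw [respectsOrder_iff_splits (nodup_append'.mp hN).2.1]
  intro A B hAB j hj i hi
  exact (respectsOrder_iff_splits hN).mp hresp (P ++ A) B
    (by rw [hAB, append_assoc]) j (mem_append_right _ hj) i hi

/-- Lift a split of a filtered list to a split of the original list,
with the prefix ending at a filtered element. -/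
lemma lift_filter (q : ι → Bool) :
    ∀ (L A B : List ι), L.filter q = A ++ B →
    ∃ P Q, L = P ++ Q ∧ P.filter q = A ∧ Q.filter q = B ∧ (A = [] → P = []) ∧
      (A ≠ [] → ∃ P₀ a, P = P₀ ++ [a] ∧ q a) := by
  intro L
  induction L with
  | nil =>
      intro A B h
      simp only [filter_nil] at h
      obtain ⟨hA, hB⟩ := append_eq_nil_iff.mp h.symm
      exact ⟨[], [], rfl, by simp [hA], by simp [hB], fun _ => rfl, fun hc => absurd hA hc⟩
  | cons x t ih =>
      intro A B h
      by_cases hq : q x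
      · rw [filter_cons_of_pos hq] at h
        cases A with
        | nil =>
            refine ⟨[], x :: t, rfl, rfl, ?_, fun _ => rfl, fun hc => absurd rfl hc⟩
            rw [filter_cons_of_pos hq]; simpa using h
        | cons a A' =>
            have hxa : x = a := by
              have := congrArg (fun l => l.head?) h
              simpa using this
            subst hxa
            have ht : t.filter q = A' ++ B := by
              have := congrArg (fun l => l.tail) h
              simpa using this
            obtain ⟨P, Q, h1, h2, h3, h4, h5⟩ := ih A' B ht
            refine ⟨x :: P, Q, by rw [cons_append, h1], ?_, h3, by simp, ?_⟩
            · rw [filter_cons_of_pos hq, h2]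
            · intro _
              cases A' with
              | nil => exact ⟨[], x, by simp [h4 rfl], hq⟩
              | cons y Y =>
                  obtain ⟨P₀, a, hP, ha⟩ := h5 (by simp)
                  exact ⟨x :: P₀, a, by rw [hP, cons_append], ha⟩
      · rw [filter_cons_of_neg hq] at h
        rcases eq_or_ne A [] with hA | hA
        · subst hA
          refine ⟨[], x :: t, rfl, rfl, ?_, fun _ => rfl, fun hc => absurd rfl hc⟩
          rw [filter_cons_of_neg hq]; simpa using h
        · obtain ⟨P, Q, h1, h2, h3, h4, h5⟩ := ih A B h
          refine ⟨x :: P, Q, by rw [cons_append, h1], ?_, h3, fun hc => absurd hc hA, ?_⟩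
          · rw [filter_cons_of_neg hq, h2]
          · intro _
            obtain ⟨P₀, a, hP, ha⟩ := h5 hA
            exact ⟨x :: P₀, a, by rw [hP, cons_append], ha⟩

lemma resp_filter {T : List ι} (hN : T.Nodup) (hresp : RespectsOrder r T) (q : ι → Bool) :
    RespectsOrder r (T.filter q) := by
  rw [respectsOrder_iff_splits (hN.filter q)]
  intro A B hAB j hj i hi
  obtain ⟨P, Q, h1, h2, h3, _, _⟩ := lift_filter q T A B hAB
  exact (respectsOrder_iff_splits hN).mp hresp P Q h1 j (by rw [← h2] at hj; exact mem_of_mem_filter hj)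
    i (by rw [← h3] at hi; exact mem_of_mem_filter hi)

lemma cost_filter_split (c : ι → ℝ) (q : ι → Bool) (L : List ι) :
    (L.map c).sum = ((L.filter q).map c).sum + ((L.filter (fun x => !q x)).map c).sum := by
  induction L with
  | nil => simp
  | cons x t ih =>
      by_cases hq : q x
      · rw [filter_cons_of_pos hq, filter_cons_of_neg (by simp [hq])]
        simp only [map_cons, sum_cons, ih]; ring
      · rw [filter_cons_of_neg hq, filter_cons_of_pos (by simp [hq])]
        simp only [map_cons, sum_cons, ih]; ring
end Part2


section Part3
set_option linter.unusedSectionVars false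
variable {r : ι → ι → Prop} {c : ι → ℝ}

lemma listCost_eq_setCost {L : List ι} (hN : L.Nodup) (c : ι → ℝ) :
    listCost c L = setCost c L.toFinset := (List.sum_toFinset c hN).symm

lemma setCost_of_schedule {L : List ι} {X : Finset ι} (hN : L.Nodup)
    (hmem : ∀ x, x ∈ L ↔ x ∈ X) (c : ι → ℝ) : listCost c L = setCost c X := by
  rw [listCost_eq_setCost hN]
  congr 1
  ext x
  rw [List.mem_toFinset, hmem]

lemma budgetSet_nonneg {X : Finset ι} {b : ℝ}
    (hb : b ∈ {b | ∃ S : List ι, IsScheduleOf X S ∧ RespectsOrder r S ∧ listBudget c S = b}) :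
    0 ≤ b := by
  obtain ⟨S, _, _, hS⟩ := hb
  rw [← hS]; exact listBudget_nonneg c S

lemma setBudget_nonneg (r : ι → ι → Prop) (c : ι → ℝ) (X : Finset ι) :
    0 ≤ setBudget r c X :=
  Real.sInf_nonneg (fun _ hb => budgetSet_nonneg hb)

lemma setBudget_le_feas {X : Finset ι} {S : List ι} (h1 : IsScheduleOf X S)
    (h2 : RespectsOrder r S) : setBudget r c X ≤ listBudget c S :=
  csInf_le ⟨0, fun _ hb => budgetSet_nonneg hb⟩ ⟨S, h1, h2, rfl⟩

lemma budgetSet_finite (r : ι → ι → Prop) (c : ι → ℝ) (X : Finset ι) :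
    {b | ∃ S : List ι, IsScheduleOf X S ∧ RespectsOrder r S ∧ listBudget c S = b}.Finite := by
  have h1 : {b | ∃ S : List ι, IsScheduleOf X S ∧ RespectsOrder r S ∧ listBudget c S = b}
      ⊆ (listBudget c) '' {S : List ι | S ∈ X.toList.permutations} := by
    rintro b ⟨S, hS, _, rfl⟩
    refine ⟨S, ?_, rfl⟩
    simp only [Set.mem_setOf_eq, List.mem_permutations]
    apply List.Subperm.antisymm
    · exact List.Nodup.subperm hS.1 (fun x hx => by
        rw [Finset.mem_toList]; exact (hS.2 x).mp hx)
    · exact List.Nodup.subperm X.nodup_toList (fun x hx => by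
        rw [hS.2 x]; exact Finset.mem_toList.mp hx)
  exact Set.Finite.subset (Set.Finite.image _ (X.toList.permutations.finite_toSet)) h1

lemma setBudget_attained {X : Finset ι}
    (hne : ∃ S : List ι, IsScheduleOf X S ∧ RespectsOrder r S) :
    ∃ S : List ι, IsScheduleOf X S ∧ RespectsOrder r S ∧ listBudget c S = setBudget r c X := by
  obtain ⟨S₀, h1, h2⟩ := hne
  have hne' : {b | ∃ S : List ι, IsScheduleOf X S ∧ RespectsOrder r S ∧
      listBudget c S = b}.Nonempty := ⟨listBudget c S₀, S₀, h1, h2, rfl⟩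
  obtain ⟨S, hS1, hS2, hS3⟩ := hne'.csInf_mem (budgetSet_finite r c X)
  exact ⟨S, hS1, hS2, hS3⟩

lemma setCost_le_setBudget {X : Finset ι}
    (hne : ∃ S : List ι, IsScheduleOf X S ∧ RespectsOrder r S) :
    setCost c X ≤ setBudget r c X := by
  obtain ⟨S₀, h1, h2⟩ := hne
  have hne' : {b | ∃ S : List ι, IsScheduleOf X S ∧ RespectsOrder r S ∧
      listBudget c S = b}.Nonempty := ⟨listBudget c S₀, S₀, h1, h2, rfl⟩
  apply le_csInf hne'
  rintro b ⟨S, hS, _, rfl⟩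
  rw [← setCost_of_schedule hS.1 hS.2 c]
  exact listCost_le_listBudget c S

lemma feas_restrict {X Y : Finset ι} {T : List ι} (hN : T.Nodup)
    (hmem : ∀ x, x ∈ T ↔ x ∈ X) (hresp : RespectsOrder r T) (hY : Y ⊆ X) :
    IsScheduleOf Y (T.filter (fun x => decide (x ∈ Y))) ∧
      RespectsOrder r (T.filter (fun x => decide (x ∈ Y))) := by
  refine ⟨⟨hN.filter _, fun j => ?_⟩, resp_filter hN hresp _⟩
  simp only [List.mem_filter, decide_eq_true_eq]
  constructor
  · exact fun h => h.2
  · intro h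
    exact ⟨(hmem j).mpr (hY h), h⟩

lemma setBudget_le_restrict {X Y : Finset ι} {T : List ι} (hN : T.Nodup)
    (hmem : ∀ x, x ∈ T ↔ x ∈ X) (hresp : RespectsOrder r T) (hY : Y ⊆ X) :
    setBudget r c Y ≤ listBudget c (T.filter (fun x => decide (x ∈ Y))) := by
  obtain ⟨h1, h2⟩ := feas_restrict hN hmem hresp hY
  exact setBudget_le_feas h1 h2

end Part3

section Part4
set_option linter.unusedSectionVars false
variable {r : ι → ι → Prop} {c : ι → ℝ}

lemma cbr_neg_right {A B : Finset ι} (h : cbrLE r c A B) (hB : setCost c B < 0) :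
    setCost c A < 0 ∧ setBudget r c A ≤ setBudget r c B := by
  rcases h with ⟨h1, h2⟩ | ⟨h1, h2, h3⟩ | ⟨h1, h2, h3, h4⟩ | ⟨h1, h2, h3⟩
  · exact absurd h2 (not_le.mpr hB)
  · exact ⟨h1, h3.le⟩
  · exact ⟨h1, h3.le⟩
  · exact absurd h2 (not_le.mpr hB)

lemma cbr_nonneg_left {A B : Finset ι} (h : cbrLE r c A B) (hA : 0 ≤ setCost c A) :
    0 ≤ setCost c B ∧
      setCost c A - setBudget r c A ≤ setCost c B - setBudget r c B := by
  rcases h with ⟨h1, h2⟩ | ⟨h1, h2, h3⟩ | ⟨h1, h2, h3, h4⟩ | ⟨h1, h2, h3⟩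
  · exact absurd h1 (not_lt.mpr hA)
  · exact absurd h1 (not_lt.mpr hA)
  · exact absurd h1 (not_lt.mpr hA)
  · refine ⟨h2, ?_⟩
    simpa [setReturn] using h3

lemma cbr_strict {I E : Finset ι} (h : cbrLE r c I E) (hEI : setCost c E < setCost c I)
    (hI : setCost c I < 0) : setBudget r c I < setBudget r c E := by
  rcases h with ⟨h1, h2⟩ | ⟨h1, h2, h3⟩ | ⟨h1, h2, h3, h4⟩ | ⟨h1, h2, h3⟩
  · linarith
  · exact h3
  · simp only [setReturn] at h4; linarith
  · linarith

/-- The structural facts we need about an increasing irreducible structure. -/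
structure GS (r : ι → ι → Prop) (c : ι → ℝ) (SS : List (List ι)) : Prop where
  nodupF : SS.flatten.Nodup
  respF : RespectsOrder r SS.flatten
  blocks : ∀ S ∈ SS, (∀ J, IsIdealIn r S.toFinset J → cbrLE r c S.toFinset J) ∧
      RespectsOrder r S ∧ listBudget c S = setBudget r c S.toFinset
  sorted : SS.Pairwise (fun A B => cbrLE r c A.toFinset B.toFinset)

lemma disj_of_nodup_flatten {SS : List (List ι)} (h : SS.flatten.Nodup) :
    SS.Pairwise (fun (A B : List ι) => _root_.Disjoint A.toFinset B.toFinset) := by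
  induction SS with
  | nil => exact List.Pairwise.nil
  | cons B SS' ih =>
      rw [flatten_cons, nodup_append'] at h
      refine List.Pairwise.cons (fun A' hA' => ?_) (ih h.2.1)
      rw [Finset.disjoint_left]
      intro x hx hx'
      exact h.2.2 (List.mem_toFinset.mp hx)
        (mem_flatten.mpr ⟨A', hA', List.mem_toFinset.mp hx'⟩)

lemma nodup_block {SS : List (List ι)} (h : SS.flatten.Nodup) {B : List ι}
    (hB : B ∈ SS) : B.Nodup := by
  obtain ⟨s, t, rfl⟩ := List.append_of_mem hB
  rw [flatten_append, flatten_cons, nodup_append'] at h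
  exact (nodup_append'.mp h.2.1).1

lemma GS.exB (gs : GS r c SS) {B : List ι} (hB : B ∈ SS) :
    IsScheduleOf B.toFinset B ∧ RespectsOrder r B :=
  ⟨⟨nodup_block gs.nodupF hB, fun x => (List.mem_toFinset).symm⟩, (gs.blocks B hB).2.1⟩

lemma cost_eq_sum_blocks (c : ι → ℝ) : ∀ (SS : List (List ι)) (L : List ι),
    (∀ x ∈ L, x ∈ SS.flatten) →
    SS.Pairwise (fun (A B : List ι) => _root_.Disjoint A.toFinset B.toFinset) →
    listCost c L =
      (SS.map (fun B => listCost c (L.filter (fun x => decide (x ∈ B.toFinset))))).sum := by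
  intro SS
  induction SS with
  | nil =>
      intro L hcov _
      have : L = [] := List.eq_nil_iff_forall_not_mem.mpr (fun x hx => by
        simpa using hcov x hx)
      simp [this]
  | cons B SS' ih =>
      intro L hcov hdisj
      have hsplit := cost_filter_split c (fun x => decide (x ∈ B.toFinset)) L
      set L' := L.filter (fun x => !decide (x ∈ B.toFinset)) with hL'
      have hcov' : ∀ x ∈ L', x ∈ SS'.flatten := by
        intro x hx
        rw [hL', List.mem_filter] at hx
        have := hcov x hx.1
        rw [flatten_cons, mem_append] at this
        rcases this with h1 | h1
        · exfalso; have := hx.2; simp [List.mem_toFinset.mpr] at this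
          exact this h1
        · exact h1
      have hrest : ∀ B' ∈ SS', L'.filter (fun x => decide (x ∈ B'.toFinset))
          = L.filter (fun x => decide (x ∈ B'.toFinset)) := by
        intro B' hB'
        have hdBB' : _root_.Disjoint B.toFinset B'.toFinset :=
          (List.pairwise_cons.mp hdisj).1 B' hB'
        rw [hL', List.filter_filter]
        apply List.filter_congr
        intro x _
        by_cases hx : x ∈ B'.toFinset
        · have hxB : x ∉ B.toFinset := Finset.disjoint_right.mp hdBB' hx
          simp [hx, hxB]
        · simp [hx]
      have hsum := ih L' hcov' (List.pairwise_cons.mp hdisj).2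
      rw [map_cons, sum_cons]
      have : (SS'.map (fun B' => listCost c (L'.filter (fun x => decide (x ∈ B'.toFinset))))).sum
          = (SS'.map (fun B' => listCost c (L.filter (fun x => decide (x ∈ B'.toFinset))))).sum := by
        congr 1
        apply List.map_congr_left
        intro B' hB'
        rw [hrest B' hB']
      rw [← this, ← hsum]
      exact hsplit

lemma feas_append {D G : Finset ι} {SD SG : List ι}
    (hD : IsScheduleOf D SD) (hrD : RespectsOrder r SD)
    (hG : IsScheduleOf G SG) (hrG : RespectsOrder r SG)
    (hdisj : _root_.Disjoint D G)
    (hno : ∀ i ∈ G, ∀ j ∈ D, ¬ r i j) :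
    IsScheduleOf (D ∪ G) (SD ++ SG) ∧ RespectsOrder r (SD ++ SG) := by
  have hnodup : (SD ++ SG).Nodup := by
    rw [nodup_append']
    exact ⟨hD.1, hG.1, fun a ha ha' =>
      Finset.disjoint_left.mp hdisj ((hD.2 a).mp ha) ((hG.2 a).mp ha')⟩
  refine ⟨⟨hnodup, fun j => ?_⟩, ?_⟩
  · rw [mem_append, Finset.mem_union, hD.2, hG.2]
  · rw [respectsOrder_iff_splits hnodup]
    intro P Q hPQ j hj i hi hr
    rcases append_eq_append_iff.mp hPQ.symm with ⟨M, hM1, hM2⟩ | ⟨M, hM1, hM2⟩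
    · -- SD = P ++ M, Q = M ++ SG
      subst hM2
      rcases mem_append.mp hi with hiM | hiG
      · exact (respectsOrder_iff_splits hD.1).mp hrD P M hM1 j hj i hiM hr
      · exact hno i ((hG.2 i).mp hiG) j ((hD.2 j).mp (hM1 ▸ mem_append_left M hj)) hr
    · -- P = SD ++ M, SG = M ++ Q
      subst hM1
      rcases mem_append.mp hj with hjD | hjM
      · exact hno i ((hG.2 i).mp (hM2 ▸ mem_append_right M hi)) j ((hD.2 j).mp hjD) hr
      · exact (respectsOrder_iff_splits hG.1).mp hrG M Q hM2 j hjM i hi hr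

lemma factN {I : Finset ι} (hirr : ∀ J, IsIdealIn r I J → cbrLE r c I J)
    (hex : ∃ S, IsScheduleOf I S ∧ RespectsOrder r S)
    (hneg : setCost c I < 0) :
    ∀ E, IsIdealIn r I E → setCost c I ≤ setCost c E := by
  suffices H : ∀ n, ∀ E, IsIdealIn r I E → (I \ E).card = n →
      setCost c E < setCost c I → False by
    intro E hE
    by_contra hlt
    push_neg at hlt
    exact H _ E hE rfl hlt
  intro n
  induction n using Nat.strong_induction_on with
  | _ n IH =>
  intro E hE hcard hcost
  have hbud : setBudget r c I < setBudget r c E := cbr_strict (hirr E hE) hcost hneg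
  obtain ⟨S, hS1, hS2, hS3⟩ := setBudget_attained hex
  obtain ⟨hf1, hf2⟩ := feas_restrict hS1.1 hS1.2 hS2 hE.1
  have h4 : setBudget r c E ≤ listBudget c (S.filter (fun x => decide (x ∈ E))) :=
    setBudget_le_feas hf1 hf2
  have h5 : listBudget c S < listBudget c (S.filter (fun x => decide (x ∈ E))) := by
    rw [hS3]; linarith
  obtain ⟨A₁, A₂, hA, hcA⟩ := exists_peak c (S.filter (fun x => decide (x ∈ E)))
  have hA1pos : listBudget c S < listCost c A₁ := by rw [hcA]; exact h5
  obtain ⟨P, Q, hPQ, hPA, hQA, -, -⟩ := lift_filter _ S A₁ A₂ hA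
  have hcp : listCost c P = listCost c A₁
      + listCost c (P.filter (fun x => !decide (x ∈ E))) := by
    have := cost_filter_split c (fun x => decide (x ∈ E)) P
    rw [hPA] at this
    exact this
  have hPle : listCost c P ≤ listBudget c S := prefix_cost_le_budget c hPQ
  have hneg2 : listCost c (P.filter (fun x => !decide (x ∈ E))) < 0 := by linarith
  -- the new larger ideal
  have hPsub : ∀ x ∈ P, x ∈ I := fun x hx => (hS1.2 x).mp (hPQ ▸ mem_append_left Q hx)
  have hideal : IsIdealIn r I (E ∪ P.toFinset) := by
    constructor
    · intro x hx
      rcases Finset.mem_union.mp hx with h1 | h1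
      · exact hE.1 h1
      · exact hPsub x (List.mem_toFinset.mp h1)
    · intro j hj i hiI hr
      rcases Finset.mem_union.mp hj with h1 | h1
      · exact Finset.mem_union_left _ (hE.2 j h1 i hiI hr)
      · refine Finset.mem_union_right _ (List.mem_toFinset.mpr ?_)
        exact resp_closed_left hS1.1 hS2 hPQ (List.mem_toFinset.mp h1) hr ((hS1.2 i).mpr hiI)
  have hPnodup : P.Nodup := (nodup_append'.mp (hPQ ▸ hS1.1)).1
  -- cost computation
  have htf : (P.filter (fun x => !decide (x ∈ E))).toFinset = P.toFinset \ E := by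
    ext x
    simp [List.mem_filter, List.mem_toFinset, Finset.mem_sdiff]
  have hcostE' : setCost c (E ∪ P.toFinset) = setCost c E
      + listCost c (P.filter (fun x => !decide (x ∈ E))) := by
    rw [listCost_eq_setCost (hPnodup.filter _), htf]
    rw [← Finset.union_sdiff_self_eq_union]
    exact Finset.sum_union (Finset.sdiff_disjoint.symm)
  -- strictness
  have hne2 : P.filter (fun x => !decide (x ∈ E)) ≠ [] := by
    intro hnil
    rw [hnil] at hneg2
    simp at hneg2
  obtain ⟨x, hx⟩ := List.exists_mem_of_ne_nil _ hne2
  have hxP : x ∈ P.toFinset \ E := htf ▸ List.mem_toFinset.mpr hx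
  have hcard2 : (I \ (E ∪ P.toFinset)).card < n := by
    rw [← hcard]
    apply Finset.card_lt_card
    constructor
    · intro y hy
      rw [Finset.mem_sdiff] at hy ⊢
      exact ⟨hy.1, fun h => hy.2 (Finset.mem_union_left _ h)⟩
    · intro hsub
      obtain ⟨hx1, hx2⟩ := Finset.mem_sdiff.mp hxP
      have : x ∈ I \ E := Finset.mem_sdiff.mpr ⟨hPsub x (List.mem_toFinset.mp hx1), hx2⟩
      have := Finset.mem_sdiff.mp (hsub this)
      exact this.2 (Finset.mem_union_right _ hx1)
  exact IH _ hcard2 (E ∪ P.toFinset) hideal rfl (by rw [hcostE']; linarith)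

lemma claimG {I D : Finset ι} (hirr : ∀ J, IsIdealIn r I J → cbrLE r c I J)
    (hex : ∃ S, IsScheduleOf I S ∧ RespectsOrder r S)
    (hcI : 0 ≤ setCost c I) (hD : IsIdealIn r I D) (hG : 0 < setCost c (I \ D)) :
    setCost c (I \ D) - setBudget r c (I \ D) ≤ setCost c I - setBudget r c I := by
  obtain ⟨S₀, hS01, hS02⟩ := hex
  have hexD : ∃ S, IsScheduleOf D S ∧ RespectsOrder r S :=
    ⟨_, feas_restrict hS01.1 hS01.2 hS02 hD.1⟩
  have hexG : ∃ S, IsScheduleOf (I \ D) S ∧ RespectsOrder r S :=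
    ⟨_, feas_restrict hS01.1 hS01.2 hS02 (Finset.sdiff_subset)⟩
  obtain ⟨SD, hD1, hD2, hD3⟩ := setBudget_attained hexD
  obtain ⟨SG, hG1, hG2, hG3⟩ := setBudget_attained hexG
  have hno : ∀ i ∈ (I \ D), ∀ j ∈ D, ¬ r i j := fun i hi j hj hr =>
    (Finset.mem_sdiff.mp hi).2 (hD.2 j hj i (Finset.mem_sdiff.mp hi).1 hr)
  obtain ⟨hS1, hS2⟩ := feas_append hD1 hD2 hG1 hG2 Finset.disjoint_sdiff hno
  rw [Finset.union_sdiff_of_subset hD.1] at hS1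
  have hsb : setBudget r c I ≤ listBudget c (SD ++ SG) := setBudget_le_feas hS1 hS2
  rw [listBudget_append, hD3, hG3, setCost_of_schedule hD1.1 hD1.2 c] at hsb
  have hsdiff : setCost c (I \ D) = setCost c I - setCost c D := by
    have := Finset.sum_sdiff (f := c) hD.1
    simp only [setCost]
    linarith
  rcases le_max_iff.mp hsb with h | h
  · -- budget I ≤ budget D : contradiction with positivity of the filter cost
    have h2 := (cbr_nonneg_left (hirr D hD) hcI).2
    have h3 := setBudget_nonneg r c D
    linarith
  · linarith

lemma ideal_cost_nonneg {I : Finset ι} (hirr : ∀ J, IsIdealIn r I J → cbrLE r c I J)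
    (hcI : 0 ≤ setCost c I) {J : Finset ι} (hJ : IsIdealIn r I J) : 0 ≤ setCost c J :=
  (cbr_nonneg_left (hirr J hJ) hcI).1

end Part4

section Part5
set_option linter.unusedSectionVars false
variable {r : ι → ι → Prop} {c : ι → ℝ}

lemma claimW {SS : List (List ι)} (gs : GS r c SS) {B₀ : List ι} {SS₂ : List (List ι)}
    (hSS : SS = B₀ :: SS₂) {T : List ι} (hT1 : IsScheduleOf SS.flatten.toFinset T)
    (hT2 : RespectsOrder r T) :
    setBudget r c B₀.toFinset ≤ listBudget c T := by
  classical
  set β := setBudget r c B₀.toFinset with hβdef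
  rcases le_or_gt β 0 with hβ | hβ
  · exact hβ.trans (listBudget_nonneg c T)
  have disj := disj_of_nodup_flatten gs.nodupF
  have hTnodup := hT1.1
  -- the (★) fact
  have star : ∀ B' ∈ SS, ∀ D : Finset ι, IsIdealIn r B'.toFinset D →
      setCost c D < 0 → β ≤ setBudget r c D := by
    intro B' hB' D hD hDneg
    have h1 := cbr_neg_right ((gs.blocks B' hB').1 D hD) hDneg
    rw [hSS] at hB'
    rcases mem_cons.mp hB' with h2 | h2
    · rw [hβdef, ← h2]; exact h1.2
    · have hcbr : cbrLE r c B₀.toFinset B'.toFinset := by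
        have := gs.sorted
        rw [hSS, List.pairwise_cons] at this
        exact this.1 B' h2
      exact le_trans (cbr_neg_right hcbr h1.1).2 h1.2
  -- main descent
  have H : ∀ n, ∀ P Q Bl P₁ a, T = P ++ Q → P = P₁ ++ [a] → P.length = n →
      Bl ∈ SS → a ∈ Bl.toFinset →
      β ≤ listCost c (P.filter (fun x => decide (x ∈ Bl.toFinset))) →
      β ≤ listBudget c T := by
    intro n
    induction n using Nat.strong_induction_on with
    | _ n IH =>
    intro P Q Bl P₁ a hPQ hPa hlen hBl haBl hcost
    have hPnodup : P.Nodup := (nodup_append'.mp (hPQ ▸ hTnodup)).1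
    have hPQdisj : List.Disjoint P Q := (nodup_append'.mp (hPQ ▸ hTnodup)).2.2
    have hcovP : ∀ x ∈ P, x ∈ SS.flatten := fun x hx =>
      List.mem_toFinset.mp ((hT1.2 x).mp (hPQ ▸ mem_append_left Q hx))
    have hsum := cost_eq_sum_blocks c SS P hcovP disj
    obtain ⟨M₁, M₂, hM⟩ := List.append_of_mem hBl
    by_cases hall : ∀ B' ∈ M₁ ++ M₂,
        0 ≤ listCost c (P.filter (fun x => decide (x ∈ B'.toFinset)))
    · -- all other block traces are nonnegative: P itself is a good prefix
      have hsum2 : β ≤ listCost c P := by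
        rw [hsum, hM, map_append, sum_append, map_cons, sum_cons]
        have h1 : 0 ≤ (M₁.map (fun B =>
            listCost c (P.filter (fun x => decide (x ∈ B.toFinset))))).sum := by
          apply List.sum_nonneg
          intro y hy
          obtain ⟨B', hB', rfl⟩ := mem_map.mp hy
          exact hall B' (mem_append_left _ hB')
        have h2 : 0 ≤ (M₂.map (fun B =>
            listCost c (P.filter (fun x => decide (x ∈ B.toFinset))))).sum := by
          apply List.sum_nonneg
          intro y hy
          obtain ⟨B', hB', rfl⟩ := mem_map.mp hy
          exact hall B' (mem_append_right _ hB')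
        linarith
      exact hsum2.trans (prefix_cost_le_budget c hPQ)
    · push_neg at hall
      obtain ⟨B', hB'mem, hB'neg⟩ := hall
      have hB'SS : B' ∈ SS := by
        rw [hM]
        rcases mem_append.mp hB'mem with h1 | h1
        · exact mem_append_left _ h1
        · exact mem_append_right _ (mem_cons_of_mem _ h1)
      have hBlB'disj : _root_.Disjoint Bl.toFinset B'.toFinset := by
        have hpw := disj
        rw [hM] at hpw
        rcases mem_append.mp hB'mem with h1 | h1
        · -- B' ∈ M₁ : B' before Bl
          have := (List.pairwise_append.mp hpw).2.2 B' h1 Bl (mem_cons_self)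
          exact this.symm
        · exact (List.pairwise_cons.mp (List.pairwise_append.mp hpw).2.1).1 B' h1
      set D := (P.filter (fun x => decide (x ∈ B'.toFinset))).toFinset with hDdef
      have hDsubB' : D ⊆ B'.toFinset := by
        intro x hx
        rw [hDdef, List.mem_toFinset, List.mem_filter] at hx
        simpa using hx.2
      have hDsubP : ∀ x ∈ D, x ∈ P := by
        intro x hx
        rw [hDdef, List.mem_toFinset, List.mem_filter] at hx
        exact hx.1
      have hB'subT : ∀ x ∈ B'.toFinset, x ∈ T := by
        intro x hx
        exact (hT1.2 x).mpr (List.mem_toFinset.mpr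
          (mem_flatten.mpr ⟨B', hB'SS, List.mem_toFinset.mp hx⟩))
      have hDideal : IsIdealIn r B'.toFinset D := by
        refine ⟨hDsubB', fun j hj i hiB' hr => ?_⟩
        have hiP : i ∈ P := resp_closed_left hTnodup hT2 hPQ (hDsubP j hj) hr (hB'subT i hiB')
        rw [hDdef, List.mem_toFinset, List.mem_filter]
        exact ⟨hiP, by simpa using hiB'⟩
      have hDcost : setCost c D < 0 := by
        rw [hDdef, ← listCost_eq_setCost (hPnodup.filter _) c]
        exact hB'neg
      have hstar : β ≤ setBudget r c D := star B' hB'SS D hDideal hDcost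
      -- restrict T to D ; this equals the restriction of P to D
      have hDsubF : D ⊆ SS.flatten.toFinset := by
        intro x hx
        exact (hT1.2 x).mp (hPQ ▸ mem_append_left Q (hDsubP x hx))
      have h6 := setBudget_le_restrict (c := c) hT1.1 hT1.2 hT2 hDsubF
      have hTD : T.filter (fun x => decide (x ∈ D)) = P.filter (fun x => decide (x ∈ D)) := by
        rw [hPQ, filter_append]
        have : Q.filter (fun x => decide (x ∈ D)) = [] := by
          rw [List.filter_eq_nil_iff]
          intro x hxQ
          simp only [decide_eq_true_eq]
          exact fun hxD => hPQdisj (hDsubP x hxD) hxQ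
        rw [this, append_nil]
      rw [hTD] at h6
      -- peak of the restriction
      obtain ⟨A₁, A₂, hA, hcA⟩ := exists_peak c (P.filter (fun x => decide (x ∈ D)))
      have hA1 : β ≤ listCost c A₁ := by
        rw [hcA]
        exact le_trans hstar h6
      have hA1ne : A₁ ≠ [] := by
        intro h
        rw [h] at hA1
        simp only [listCost_nil] at hA1
        linarith
      obtain ⟨P', Q', hPQ', hPA', hQA', hnil', hlast'⟩ :=
        lift_filter (fun x => decide (x ∈ D)) P A₁ A₂ hA
      obtain ⟨P₀', a', hPa', ha'⟩ := hlast' hA1ne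
      have ha'D : a' ∈ D := of_decide_eq_true ha'
      -- strictness
      have hlenlt : P'.length < n := by
        rcases eq_or_ne Q' [] with hQ'nil | hQ'ne
        · -- then P' = P ; contradiction via the last elements and block disjointness
          exfalso
          rw [hQ'nil, append_nil] at hPQ'
          have haa : a = a' := by
            have := hPa.symm.trans (hPQ' ▸ hPa')
            have h2 := congrArg (fun l => l.getLast?) this
            simp only [List.getLast?_append, List.getLast?_singleton] at h2
            exact (Option.some_injective _ h2)
          exact Finset.disjoint_left.mp hBlB'disj haBl
            (hDsubB' (haa ▸ ha'D))
        · rw [← hlen, hPQ']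
          rw [length_append]
          have : 0 < Q'.length := List.length_pos_iff.mpr hQ'ne
          omega
      -- recursion invariant
      have hfilter_eq : P'.filter (fun x => decide (x ∈ B'.toFinset))
          = P'.filter (fun x => decide (x ∈ D)) := by
        apply List.filter_congr
        intro x hx
        have hxP : x ∈ P := hPQ' ▸ mem_append_left Q' hx
        rw [decide_eq_decide]
        constructor
        · intro hxB'
          rw [hDdef, List.mem_toFinset, List.mem_filter]
          exact ⟨hxP, by simpa using hxB'⟩
        · exact fun hxD => hDsubB' hxD
      have hcost' : β ≤ listCost c (P'.filter (fun x => decide (x ∈ B'.toFinset))) := by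
        rw [hfilter_eq, hPA']
        exact hA1
      exact IH P'.length hlenlt P' (Q' ++ Q) B' P₀' a'
        (by rw [hPQ, hPQ', append_assoc]) hPa' rfl hB'SS (hDsubB' ha'D) hcost' 
  -- initialization
  have hB₀SS : B₀ ∈ SS := by rw [hSS]; exact mem_cons_self
  have hB₀sub : B₀.toFinset ⊆ SS.flatten.toFinset := by
    intro x hx
    exact List.mem_toFinset.mpr (mem_flatten.mpr ⟨B₀, hB₀SS, List.mem_toFinset.mp hx⟩)
  have hres := setBudget_le_restrict (c := c) hT1.1 hT1.2 hT2 hB₀sub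
  obtain ⟨A₁, A₂, hA, hcA⟩ := exists_peak c (T.filter (fun x => decide (x ∈ B₀.toFinset)))
  have hA1 : β ≤ listCost c A₁ := by rw [hcA]; exact hres
  have hA1ne : A₁ ≠ [] := by
    intro h
    rw [h] at hA1
    simp only [listCost_nil] at hA1
    linarith
  obtain ⟨P, Q, hPQ, hPA, hQA, hnil, hlast⟩ :=
    lift_filter (fun x => decide (x ∈ B₀.toFinset)) T A₁ A₂ hA
  obtain ⟨P₀, a, hPa, ha⟩ := hlast hA1ne
  exact H P.length P Q B₀ P₀ a hPQ hPa rfl hB₀SS (of_decide_eq_true ha) (by rw [hPA]; exact hA1)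

end Part5

section Part6
set_option linter.unusedSectionVars false
variable {r : ι → ι → Prop} {c : ι → ℝ}

/-- One block admits a "dip split": a suffix whose trace on the block costs at most
the block's return. -/
lemma exists_dip {SS : List (List ι)} (gs : GS r c SS) {B : List ι} (hB : B ∈ SS)
    {T : List ι} (hT1 : IsScheduleOf SS.flatten.toFinset T) (hT2 : RespectsOrder r T) :
    ∃ P Q, T = P ++ Q ∧
      listCost c (Q.filter (fun x => decide (x ∈ B.toFinset)))
        ≤ setCost c B.toFinset - setBudget r c B.toFinset := by
  have hBsub : B.toFinset ⊆ SS.flatten.toFinset := by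
    intro x hx
    exact List.mem_toFinset.mpr (mem_flatten.mpr ⟨B, hB, List.mem_toFinset.mp hx⟩)
  have hres := setBudget_le_restrict (c := c) hT1.1 hT1.2 hT2 hBsub
  obtain ⟨hf1, hf2⟩ := feas_restrict (r := r) hT1.1 hT1.2 hT2 hBsub
  obtain ⟨A₁, A₂, hA, hcA⟩ := exists_peak c (T.filter (fun x => decide (x ∈ B.toFinset)))
  obtain ⟨P, Q, hPQ, hPA, hQA, -, -⟩ :=
    lift_filter (fun x => decide (x ∈ B.toFinset)) T A₁ A₂ hA
  refine ⟨P, Q, hPQ, ?_⟩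
  have hcostT : listCost c (T.filter (fun x => decide (x ∈ B.toFinset)))
      = setCost c B.toFinset := setCost_of_schedule hf1.1 hf1.2 c
  have hsplit : listCost c (T.filter (fun x => decide (x ∈ B.toFinset)))
      = listCost c A₁ + listCost c (Q.filter (fun x => decide (x ∈ B.toFinset))) := by
    rw [hA, listCost_append, hQA]
  rw [hcA] at hsplit
  have : setBudget r c B.toFinset ≤ listBudget c (T.filter (fun x => decide (x ∈ B.toFinset))) :=
    hres
  linarith [hcostT, hsplit, this]

lemma finalBoss {SS : List (List ι)} (gs : GS r c SS)
    (hnn : ∀ B ∈ SS, 0 ≤ setCost c B.toFinset) (hne : SS ≠ [])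
    {T : List ι} (hT1 : IsScheduleOf SS.flatten.toFinset T) (hT2 : RespectsOrder r T) :
    ∃ M₁ Bj M₂, SS = M₁ ++ Bj :: M₂ ∧
      listCost c SS.flatten - setCost c Bj.toFinset + setBudget r c Bj.toFinset
        ≤ listBudget c T := by
  classical
  set DipSet : Set ℕ := {n | ∃ M₁ Bj M₂ P Q, SS = M₁ ++ Bj :: M₂ ∧ T = P ++ Q ∧
    Q.length = n ∧ listCost c (Q.filter (fun x => decide (x ∈ Bj.toFinset)))
      ≤ setCost c Bj.toFinset - setBudget r c Bj.toFinset} with hDipSet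
  have hDipNe : DipSet.Nonempty := by
    obtain ⟨B, SS₂, rfl⟩ := List.exists_cons_of_ne_nil hne
    obtain ⟨P, Q, hPQ, hd⟩ := exists_dip gs (mem_cons_self) hT1 hT2
    exact ⟨Q.length, [], B, SS₂, P, Q, rfl, hPQ, rfl, hd⟩
  have hmem := Nat.sInf_mem hDipNe
  set n₀ := sInf DipSet with hn₀
  obtain ⟨M₁, Bj₀, M₂, P₀, Q₀, hSSd, hPQ₀, hlen₀, hdip₀⟩ := hmem
  have hTnodup := hT1.1
  have hQ₀nodup : Q₀.Nodup := (nodup_append'.mp (hPQ₀ ▸ hTnodup)).2.1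
  have hPQ₀disj : List.Disjoint P₀ Q₀ := (nodup_append'.mp (hPQ₀ ▸ hTnodup)).2.2
  -- all other blocks have nonpositive trace on Q₀
  have hothers : ∀ B', (B' ∈ M₁ ∨ B' ∈ M₂) →
      listCost c (Q₀.filter (fun x => decide (x ∈ B'.toFinset))) ≤ 0 := by
    intro B' hB'mem
    by_contra hpos
    push_neg at hpos
    have hB'SS : B' ∈ SS := by
      rw [hSSd]
      rcases hB'mem with h1 | h1
      · exact mem_append_left _ h1
      · exact mem_append_right _ (mem_cons_of_mem _ h1)
    set LG := Q₀.filter (fun x => decide (x ∈ B'.toFinset)) with hLG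
    set G := LG.toFinset with hG
    have hGsubB' : G ⊆ B'.toFinset := by
      intro x hx
      rw [hG, List.mem_toFinset, hLG, List.mem_filter] at hx
      simpa using hx.2
    have hGsubQ₀ : ∀ x ∈ G, x ∈ Q₀ := by
      intro x hx
      rw [hG, List.mem_toFinset, hLG, List.mem_filter] at hx
      exact hx.1
    have hB'subT : ∀ x ∈ B'.toFinset, x ∈ T := by
      intro x hx
      exact (hT1.2 x).mpr (List.mem_toFinset.mpr
        (mem_flatten.mpr ⟨B', hB'SS, List.mem_toFinset.mp hx⟩))
    -- D := B' \ G is an ideal of B'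
    have hDideal : IsIdealIn r B'.toFinset (B'.toFinset \ G) := by
      refine ⟨Finset.sdiff_subset, fun j hj i hiB' hr => ?_⟩
      rw [Finset.mem_sdiff] at hj ⊢
      refine ⟨hiB', fun hiG => ?_⟩
      have hjT : j ∈ T := hB'subT j hj.1
      have hjQ₀ : j ∈ Q₀ := by
        rw [hPQ₀] at hjT
        rcases mem_append.mp hjT with h1 | h1
        · exfalso
          exact absurd hr ((respectsOrder_iff_splits hTnodup).mp hT2 P₀ Q₀ hPQ₀ j h1 i
            (hGsubQ₀ i hiG))
        · exact h1
      have : j ∈ G := by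
        rw [hG, List.mem_toFinset, hLG, List.mem_filter]
        exact ⟨hjQ₀, by simpa using hj.1⟩
      exact hj.2 this
    have hGeq : B'.toFinset \ (B'.toFinset \ G) = G := by
      ext x
      simp only [Finset.mem_sdiff, not_and, not_not]
      constructor
      · rintro ⟨hxB, h2⟩; exact h2 hxB
      · intro hxG; exact ⟨hGsubB' hxG, fun _ => hxG⟩
    have hLGnodup : LG.Nodup := hQ₀nodup.filter _
    have hcostG : setCost c G = listCost c LG := by
      rw [hG, ← listCost_eq_setCost hLGnodup c]
    have hclaimG := claimG (r := r) ((gs.blocks B' hB'SS).1) ⟨B', gs.exB hB'SS⟩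
      (hnn B' hB'SS) hDideal (by rw [hGeq, hcostG]; exact hpos)
    rw [hGeq] at hclaimG
    -- LG is the restriction of T to G
    have hGsubF : G ⊆ SS.flatten.toFinset := fun x hx => (hT1.2 x).mp (by
      rw [hPQ₀]; exact mem_append_right P₀ (hGsubQ₀ x hx))
    have hbudG := setBudget_le_restrict (c := c) hT1.1 hT1.2 hT2 hGsubF
    have hTG : T.filter (fun x => decide (x ∈ G)) = LG := by
      rw [hPQ₀, filter_append]
      have h1 : P₀.filter (fun x => decide (x ∈ G)) = [] := by
        rw [List.filter_eq_nil_iff]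
        intro x hxP
        simp only [decide_eq_true_eq]
        exact fun hxG => hPQ₀disj hxP (hGsubQ₀ x hxG)
      have h2 : Q₀.filter (fun x => decide (x ∈ G)) = LG := by
        rw [hLG]
        apply List.filter_congr
        intro x hx
        rw [decide_eq_decide]
        constructor
        · exact fun hxG => by simpa using List.mem_toFinset.mp (hGsubB' hxG)
        · intro hxB'
          rw [hG, List.mem_toFinset, hLG, List.mem_filter]
          exact ⟨hx, by simpa using hxB'⟩
      rw [h1, h2, nil_append]
    rw [hTG] at hbudG
    -- peak of LG
    obtain ⟨A₁, A₂, hA, hcA⟩ := exists_peak c LG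
    have hretB' : setBudget r c G ≥ setCost c G - (setCost c B'.toFinset
        - setBudget r c B'.toFinset) := by linarith
    have hA1pos : 0 < listCost c A₁ := by
      have hretnp : setCost c B'.toFinset - setBudget r c B'.toFinset ≤ 0 := by
        have := setCost_le_setBudget (r := r) (c := c) ⟨B', gs.exB hB'SS⟩
        linarith
      have : setBudget r c G ≤ listCost c A₁ := by rw [hcA]; exact hbudG
      rw [hcostG] at hretB'
      have hLGpos : 0 < listCost c LG := hpos
      linarith
    have hA1ne : A₁ ≠ [] := by
      intro h
      rw [h] at hA1pos
      simp at hA1pos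
    obtain ⟨R₁, R₂, hR, hRA₁, hRA₂, hRnil, hRlast⟩ :=
      lift_filter (fun x => decide (x ∈ B'.toFinset)) Q₀ A₁ A₂ (hLG ▸ hA)
    have hR₁ne : R₁ ≠ [] := by
      obtain ⟨R₀, a, hRa, -⟩ := hRlast hA1ne
      rw [hRa]
      simp
    -- the new, smaller dip
    have hnewdip : R₂.length ∈ DipSet := by
      have hdipval : listCost c (R₂.filter (fun x => decide (x ∈ B'.toFinset)))
          ≤ setCost c B'.toFinset - setBudget r c B'.toFinset := by
        have hsplitLG : listCost c LG = listCost c A₁ + listCost c A₂ := by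
          rw [hA, listCost_append]
        have hA₁big : setCost c G - (setCost c B'.toFinset - setBudget r c B'.toFinset)
            ≤ listCost c A₁ := by
          have : setBudget r c G ≤ listCost c A₁ := by rw [hcA]; exact hbudG
          linarith
        rw [hRA₂]
        rw [hcostG] at hA₁big
        linarith
      obtain ⟨u, v, huv⟩ : ∃ u v, SS = u ++ B' :: v := by
        rcases hB'mem with h1 | h1
        · obtain ⟨u, v, huv⟩ := List.append_of_mem h1
          exact ⟨u, v ++ Bj₀ :: M₂, by rw [hSSd, huv, append_assoc, cons_append]⟩
        · obtain ⟨u, v, huv⟩ := List.append_of_mem h1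
          exact ⟨M₁ ++ Bj₀ :: u, v, by rw [hSSd, huv]; simp⟩
      exact ⟨u, B', v, P₀ ++ R₁, R₂, huv, by rw [hPQ₀, hR, append_assoc], rfl, hdipval⟩
    have hlt : R₂.length < n₀ := by
      rw [← hlen₀, hR, length_append]
      have : 0 < R₁.length := List.length_pos_iff.mpr hR₁ne
      omega
    exact absurd (Nat.sInf_le hnewdip) (by omega)
  -- now sum up
  refine ⟨M₁, Bj₀, M₂, hSSd, ?_⟩
  have hcovQ₀ : ∀ x ∈ Q₀, x ∈ SS.flatten := fun x hx =>
    List.mem_toFinset.mp ((hT1.2 x).mp (hPQ₀ ▸ mem_append_right P₀ hx))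
  have hsum := cost_eq_sum_blocks c SS Q₀ hcovQ₀ (disj_of_nodup_flatten gs.nodupF)
  have hQ₀cost : listCost c Q₀ ≤ setCost c Bj₀.toFinset - setBudget r c Bj₀.toFinset := by
    rw [hsum, hSSd, map_append, sum_append, map_cons, sum_cons]
    have h1 : (M₁.map (fun B =>
        listCost c (Q₀.filter (fun x => decide (x ∈ B.toFinset))))).sum ≤ 0 := by
      have := List.sum_le_sum (l := M₁) (g := fun _ => (0:ℝ))
        (fun B' hB' => hothers B' (Or.inl hB'))
      simpa using this
    have h2 : (M₂.map (fun B =>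
        listCost c (Q₀.filter (fun x => decide (x ∈ B.toFinset))))).sum ≤ 0 := by
      have := List.sum_le_sum (l := M₂) (g := fun _ => (0:ℝ))
        (fun B' hB' => hothers B' (Or.inr hB'))
      simpa using this
    linarith [hdip₀]
  have hcostT : listCost c T = listCost c SS.flatten := by
    rw [setCost_of_schedule hT1.1 hT1.2 c, listCost_eq_setCost gs.nodupF c]
  have hcostP₀ : listCost c P₀ = listCost c T - listCost c Q₀ := by
    rw [hPQ₀, listCost_append]; ring
  have := prefix_cost_le_budget c hPQ₀
  linarith
end Part6

section Part7
set_option linter.unusedSectionVars false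
variable {r : ι → ι → Prop} {c : ι → ℝ}

lemma prefix_trace_ideal {T P Q : List ι} (hN : T.Nodup) (hresp : RespectsOrder r T)
    (hPQ : T = P ++ Q) {B : Finset ι} (hBsub : ∀ x ∈ B, x ∈ T) :
    IsIdealIn r B ((P.filter (fun x => decide (x ∈ B))).toFinset) := by
  constructor
  · intro x hx
    rw [List.mem_toFinset, List.mem_filter] at hx
    simpa using hx.2
  · intro j hj i hiB hr
    rw [List.mem_toFinset, List.mem_filter] at hj
    have hiP : i ∈ P := resp_closed_left hN hresp hPQ hj.1 hr (hBsub i hiB)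
    rw [List.mem_toFinset, List.mem_filter]
    exact ⟨hiP, by simpa using hiB⟩

lemma GS.tail {B₀ : List ι} {SS₂ : List (List ι)} (gs : GS r c (B₀ :: SS₂)) :
    GS r c SS₂ := by
  have hfl : (B₀ :: SS₂).flatten = B₀ ++ SS₂.flatten := rfl
  have hnd := gs.nodupF
  have hrs := gs.respF
  rw [hfl] at hnd hrs
  exact ⟨(nodup_append'.mp hnd).2.1, resp_of_suffix hnd hrs,
    fun S hS => gs.blocks S (mem_cons_of_mem _ hS),
    (List.pairwise_cons.mp gs.sorted).2⟩

lemma feas_tail {B₀ : List ι} {SS₂ : List (List ι)} (gs : GS r c (B₀ :: SS₂)) {T : List ι}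
    (hT1 : IsScheduleOf (B₀ :: SS₂).flatten.toFinset T) (hT2 : RespectsOrder r T) :
    IsScheduleOf SS₂.flatten.toFinset (T.filter (fun x => !decide (x ∈ B₀.toFinset)))
      ∧ RespectsOrder r (T.filter (fun x => !decide (x ∈ B₀.toFinset))) := by
  have hfl : (B₀ :: SS₂).flatten = B₀ ++ SS₂.flatten := rfl
  have hnd := gs.nodupF
  rw [hfl, nodup_append'] at hnd
  refine ⟨⟨hT1.1.filter _, fun j => ?_⟩, resp_filter hT1.1 hT2 _⟩
  rw [List.mem_filter]
  constructor
  · rintro ⟨hjT, hj2⟩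
    have := (hT1.2 j).mp hjT
    rw [List.mem_toFinset, hfl, mem_append] at this
    rcases this with h1 | h1
    · exfalso
      simp only [Bool.not_eq_true', decide_eq_false_iff_not, List.mem_toFinset] at hj2
      exact hj2 h1
    · exact List.mem_toFinset.mpr h1
  · intro hj
    rw [List.mem_toFinset] at hj
    have hjB₀ : j ∉ B₀ := fun h => hnd.2.2 h hj
    refine ⟨(hT1.2 j).mpr (by rw [List.mem_toFinset, hfl, mem_append]; exact Or.inr hj), ?_⟩
    simpa using hjB₀

lemma peel {B₀ : List ι} {SS₂ : List (List ι)} (gs : GS r c (B₀ :: SS₂)) {T : List ι}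
    (hT1 : IsScheduleOf (B₀ :: SS₂).flatten.toFinset T) (hT2 : RespectsOrder r T)
    (hneg : setCost c B₀.toFinset < 0) :
    setCost c B₀.toFinset +
      listBudget c (T.filter (fun x => !decide (x ∈ B₀.toFinset))) ≤ listBudget c T := by
  have hB₀mem : B₀ ∈ B₀ :: SS₂ := mem_cons_self
  have hB₀subT : ∀ x ∈ B₀.toFinset, x ∈ T := by
    intro x hx
    exact (hT1.2 x).mpr (List.mem_toFinset.mpr
      (mem_flatten.mpr ⟨B₀, hB₀mem, List.mem_toFinset.mp hx⟩))
  have key : listBudget c (T.filter (fun x => !decide (x ∈ B₀.toFinset)))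
      ≤ listBudget c T - setCost c B₀.toFinset := by
    apply budget_le_of_prefixes
    intro A B hAB
    obtain ⟨P, Q, hPQ, hPA, hQB, -, -⟩ :=
      lift_filter (fun x => !decide (x ∈ B₀.toFinset)) T A B hAB
    have hsplit := cost_filter_split c (fun x => !decide (x ∈ B₀.toFinset)) P
    have hdn : P.filter (fun x => !(!decide (x ∈ B₀.toFinset)))
        = P.filter (fun x => decide (x ∈ B₀.toFinset)) := by
      apply List.filter_congr
      intro x _
      simp
    rw [hdn, hPA] at hsplit
    have hsplit' : listCost c P = listCost c A
        + listCost c (P.filter (fun x => decide (x ∈ B₀.toFinset))) := hsplit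
    have hPnodup : P.Nodup := (nodup_append'.mp (hPQ ▸ hT1.1)).1
    have hideal := prefix_trace_ideal (B := B₀.toFinset) hT1.1 hT2 hPQ hB₀subT
    have hfN := factN ((gs.blocks B₀ hB₀mem).1) ⟨B₀, gs.exB hB₀mem⟩ hneg _ hideal
    rw [← listCost_eq_setCost (hPnodup.filter _) c] at hfN
    have hPle : listCost c P ≤ listBudget c T := prefix_cost_le_budget c hPQ
    linarith
  linarith
end Part7

section Part7b
set_option linter.unusedSectionVars false
variable {r : ι → ι → Prop} {c : ι → ℝ}

lemma GS.kept {K M₂ : List (List ι)} (gs : GS r c (K ++ M₂)) : GS r c K := by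
  have hfl : (K ++ M₂).flatten = K.flatten ++ M₂.flatten := flatten_append
  have hnd := gs.nodupF
  have hrs := gs.respF
  rw [hfl] at hnd hrs
  exact ⟨(nodup_append'.mp hnd).1, resp_of_prefix hnd hrs,
    fun S hS => gs.blocks S (mem_append_left _ hS),
    gs.sorted.sublist (sublist_append_left K M₂)⟩

lemma budget_trunc {K M₂ : List (List ι)} (gs : GS r c (K ++ M₂))
    (hnnd : ∀ B ∈ M₂, 0 ≤ setCost c B.toFinset)
    {T : List ι} (hT1 : IsScheduleOf (K ++ M₂).flatten.toFinset T)
    (hT2 : RespectsOrder r T) :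
    listBudget c (T.filter (fun x => decide (x ∈ K.flatten.toFinset)))
      ≤ listBudget c T := by
  apply budget_le_of_prefixes
  intro A B hAB
  obtain ⟨P, Q, hPQ, hPA, hQB, -, -⟩ :=
    lift_filter (fun x => decide (x ∈ K.flatten.toFinset)) T A B hAB
  have hsplit : listCost c P = listCost c A
      + listCost c (P.filter (fun x => !decide (x ∈ K.flatten.toFinset))) := by
    have := cost_filter_split c (fun x => decide (x ∈ K.flatten.toFinset)) P
    rw [hPA] at this
    exact this
  have hfl : (K ++ M₂).flatten = K.flatten ++ M₂.flatten := flatten_append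
  set L' := P.filter (fun x => !decide (x ∈ K.flatten.toFinset)) with hL'
  have hPsubT : ∀ x ∈ P, x ∈ T := fun x hx => hPQ ▸ mem_append_left Q hx
  have hcov : ∀ x ∈ L', x ∈ M₂.flatten := by
    intro x hx
    rw [hL', List.mem_filter] at hx
    have hxT := (hT1.2 x).mp (hPsubT x hx.1)
    rw [List.mem_toFinset, hfl, mem_append] at hxT
    rcases hxT with h1 | h1
    · exfalso
      have := hx.2
      simp only [Bool.not_eq_true', decide_eq_false_iff_not, List.mem_toFinset] at this
      exact this h1
    · exact h1
  have hndM₂ : M₂.flatten.Nodup := by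
    have := gs.nodupF
    rw [hfl, nodup_append'] at this
    exact this.2.1
  have hdisjKM : List.Disjoint K.flatten M₂.flatten := by
    have := gs.nodupF
    rw [hfl, nodup_append'] at this
    exact this.2.2
  have hsum := cost_eq_sum_blocks c M₂ L' hcov (disj_of_nodup_flatten hndM₂)
  have hterm : ∀ B' ∈ M₂, 0 ≤ listCost c (L'.filter (fun x => decide (x ∈ B'.toFinset))) := by
    intro B' hB'
    have heq : L'.filter (fun x => decide (x ∈ B'.toFinset))
        = P.filter (fun x => decide (x ∈ B'.toFinset)) := by
      rw [hL', List.filter_filter]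
      apply List.filter_congr
      intro x hxP
      by_cases hx : x ∈ B'.toFinset
      · have hxM : x ∈ M₂.flatten :=
          mem_flatten.mpr ⟨B', hB', List.mem_toFinset.mp hx⟩
        have hxK : x ∉ K.flatten.toFinset := by
          rw [List.mem_toFinset]
          intro hc
          exact hdisjKM hc hxM
        simp [hx, hxK]
      · simp [hx]
    have hB'subT : ∀ x ∈ B'.toFinset, x ∈ T := by
      intro x hx
      refine (hT1.2 x).mpr (List.mem_toFinset.mpr ?_)
      rw [hfl, mem_append]
      exact Or.inr (mem_flatten.mpr ⟨B', hB', List.mem_toFinset.mp hx⟩)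
    have hideal := prefix_trace_ideal (B := B'.toFinset) hT1.1 hT2 hPQ hB'subT
    have hB'SS : B' ∈ K ++ M₂ := mem_append_right _ hB'
    have h0 := ideal_cost_nonneg ((gs.blocks B' hB'SS).1) (hnnd B' hB') hideal
    have hPnodup : P.Nodup := (nodup_append'.mp (hPQ ▸ hT1.1)).1
    rw [← listCost_eq_setCost (hPnodup.filter _) c] at h0
    rw [heq]
    exact h0
  have hL'nn : 0 ≤ listCost c L' := by
    rw [hsum]
    apply List.sum_nonneg
    intro y hy
    obtain ⟨B', hB', rfl⟩ := mem_map.mp hy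
    exact hterm B' hB'
  have := prefix_cost_le_budget c hPQ
  linarith

theorem perI : ∀ (SS : List (List ι)), GS r c SS → ∀ T : List ι,
    IsScheduleOf SS.flatten.toFinset T → RespectsOrder r T →
    ∀ L₁ B L₂, SS = L₁ ++ B :: L₂ →
    listCost c L₁.flatten + setBudget r c B.toFinset ≤ listBudget c T := by
  intro SS
  induction SS with
  | nil =>
      intro _ _ _ _ L₁ B L₂ h
      exact absurd h (by cases L₁ <;> simp)
  | cons B₀ SS₂ ih =>
      intro gs T hT1 hT2 L₁ B L₂ hd
      cases L₁ with
      | nil =>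
          have hBB₀ : B = B₀ := by
            simp only [nil_append] at hd
            exact (List.cons.injEq _ _ _ _ ▸ hd).1.symm
          subst hBB₀
          have := claimW gs rfl hT1 hT2
          simpa using this
      | cons Bh L₁' =>
          have hdh : B₀ = Bh ∧ SS₂ = L₁' ++ B :: L₂ := by
            rw [cons_append] at hd
            exact ⟨(List.cons.injEq _ _ _ _ ▸ hd).1, (List.cons.injEq _ _ _ _ ▸ hd).2⟩
          obtain ⟨hBh, hSS₂⟩ := hdh
          subst hBh
          have hcflat : listCost c ((B₀ :: L₁').flatten)
              = listCost c B₀ + listCost c L₁'.flatten := by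
            rw [show (B₀ :: L₁').flatten = B₀ ++ L₁'.flatten from rfl, listCost_append]
          have hcB₀ : listCost c B₀ = setCost c B₀.toFinset :=
            listCost_eq_setCost (nodup_block gs.nodupF (mem_cons_self)) c
          rcases lt_or_ge (setCost c B₀.toFinset) 0 with hneg | hpos
          · -- peel off the negative head block
            have hpeel := peel gs hT1 hT2 hneg
            obtain ⟨hf1, hf2⟩ := feas_tail gs hT1 hT2
            have hrec := ih gs.tail _ hf1 hf2 L₁' B L₂ hSS₂
            rw [hcflat, hcB₀]
            linarith
          · -- all blocks nonnegative : truncate and use the final boss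
            have hsorted := gs.sorted
            rw [List.pairwise_cons] at hsorted
            have hnnall : ∀ B' ∈ B₀ :: SS₂, 0 ≤ setCost c B'.toFinset := by
              intro B' hB'
              rcases mem_cons.mp hB' with h1 | h1
              · rw [h1]; exact hpos
              · exact (cbr_nonneg_left (hsorted.1 B' h1) hpos).1
            set K : List (List ι) := (B₀ :: L₁') ++ [B] with hK
            have hSSd : B₀ :: SS₂ = K ++ L₂ := by
              rw [hK, hSS₂]
              simp
            have gs' : GS r c (K ++ L₂) := by rw [← hSSd]; exact gs
            have gsK : GS r c K := gs'.kept
            have hT1' : IsScheduleOf (K ++ L₂).flatten.toFinset T := by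
              rw [← hSSd]; exact hT1
            have htrunc := budget_trunc gs' (fun B' hB' => hnnall B' (by
              rw [hSSd]; exact mem_append_right _ hB')) hT1' hT2
            have hKsub : K.flatten.toFinset ⊆ (K ++ L₂).flatten.toFinset := by
              intro x hx
              rw [List.mem_toFinset] at hx ⊢
              rw [flatten_append, mem_append]
              exact Or.inl hx
            obtain ⟨hg1, hg2⟩ := feas_restrict (r := r) hT1'.1 hT1'.2 hT2 hKsub
            have hnnK : ∀ B' ∈ K, 0 ≤ setCost c B'.toFinset := fun B' hB' =>
              hnnall B' (by rw [hSSd]; exact mem_append_left _ hB')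
            have hKne : K ≠ [] := by rw [hK]; simp
            obtain ⟨M₁, Bj₀, M₂, hKd, hbound⟩ := finalBoss gsK hnnK hKne hg1 hg2
            -- return comparison between Bj₀ and B
            have hret : setCost c Bj₀.toFinset - setBudget r c Bj₀.toFinset
                ≤ setCost c B.toFinset - setBudget r c B.toFinset := by
              rcases eq_or_ne M₂ [] with hM₂ | hM₂
              · -- Bj₀ is the last block, i.e. B
                have : Bj₀ = B := by
                  subst hM₂
                  have h2 := congrArg (fun l => l.getLast?) hKd
                  simp only [hK] at h2
                  simp only [List.getLast?_append, List.getLast?_singleton] at h2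
                  simpa using h2.symm
                rw [this]
              · have hBlast : B ∈ M₂ := by
                  obtain ⟨m, M₂', rfl⟩ := List.exists_cons_of_ne_nil hM₂
                  have h2 := congrArg (fun l => l.getLast?) hKd
                  simp only [hK, List.getLast?_append, List.getLast?_singleton,
                    List.getLast?_cons_cons, show ∀ (a : List ι) (o : Option (List ι)),
                      (some a).or o = some a from fun _ _ => rfl] at h2
                  have hgl : (m :: M₂').getLast? = some ((m :: M₂').getLast (by simp)) :=
                    List.getLast?_eq_getLast (by simp)
                  rw [hgl, show ∀ (a : List ι) (o : Option (List ι)),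
                      (some a).or o = some a from fun _ _ => rfl] at h2
                  have h4 : (m :: M₂').getLast (by simp) = B := by
                    have := h2.symm
                    simpa using this
                  exact h4 ▸ List.getLast_mem (by simp)
                have hcbr : cbrLE r c Bj₀.toFinset B.toFinset := by
                  have hp := gsK.sorted
                  rw [hKd] at hp
                  exact (List.pairwise_cons.mp (List.pairwise_append.mp hp).2.1).1 B hBlast
                have hBj₀K : Bj₀ ∈ K := by rw [hKd]; exact mem_append_right _ (mem_cons_self)
                exact (cbr_nonneg_left hcbr (hnnK Bj₀ hBj₀K)).2
            have hKflat : listCost c K.flatten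
                = listCost c ((B₀ :: L₁').flatten) + setCost c B.toFinset := by
              rw [hK, flatten_append, listCost_append]
              congr 1
              rw [show ([B] : List (List ι)).flatten = B ++ [] from rfl, append_nil]
              exact listCost_eq_setCost (nodup_block gsK.nodupF (by rw [hK]; simp)) c
            rw [hKflat] at hbound
            linarith
end Part7b

section Part8
set_option linter.unusedSectionVars false
variable {r : ι → ι → Prop} {c : ι → ℝ}

lemma flatten_budget_le (c : ι → ℝ) : ∀ (SS : List (List ι)) (X : ℝ), 0 ≤ X →
    (∀ L₁ B L₂, SS = L₁ ++ B :: L₂ → listCost c L₁.flatten + listBudget c B ≤ X) →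
    listBudget c SS.flatten ≤ X := by
  intro SS
  induction SS with
  | nil => intro X hX _; simpa using hX
  | cons B₀ SS₂ ih =>
      intro X hX h
      rw [show (B₀ :: SS₂).flatten = B₀ ++ SS₂.flatten from rfl, listBudget_append]
      apply max_le
      · have := h [] B₀ SS₂ rfl
        simpa using this
      · have hcle : listCost c B₀ ≤ X := by
          have h1 := h [] B₀ SS₂ rfl
          have h2 := listCost_le_listBudget c B₀
          simp only [flatten_nil, listCost_nil, zero_add] at h1
          linarith
        have := ih (X - listCost c B₀) (by linarith) (fun L₁ B L₂ hd => by
          have h3 := h (B₀ :: L₁) B L₂ (by rw [hd, cons_append])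
          rw [show (B₀ :: L₁).flatten = B₀ ++ L₁.flatten from rfl, listCost_append] at h3
          linarith)
        linarith

theorem thmA {SS : List (List ι)} (gs : GS r c SS) {T : List ι}
    (hT1 : IsScheduleOf SS.flatten.toFinset T) (hT2 : RespectsOrder r T) :
    listBudget c SS.flatten ≤ listBudget c T := by
  apply flatten_budget_le c SS _ (listBudget_nonneg c T)
  intro L₁ B L₂ hd
  have hB : B ∈ SS := by rw [hd]; exact mem_append_right _ (mem_cons_self)
  rw [(gs.blocks B hB).2.2]
  exact perI SS gs T hT1 hT2 L₁ B L₂ hd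

lemma gs_of_inc {N : Finset ι} {SS : List (List ι)}
    (h : IncIrrStructure r c N SS) : GS r c SS ∧ SS.flatten.toFinset = N := by
  obtain ⟨h1, h2, h3, h4⟩ := h
  constructor
  · refine ⟨h1.1, h2, fun S hS => ⟨((h3 S hS).1).2, (h3 S hS).2.1, (h3 S hS).2.2⟩, ?_⟩
    rw [List.pairwise_iff_get]
    intro i j hij
    exact h4 i j hij
  · ext x
    rw [List.mem_toFinset, h1.2 x]

lemma resp_of_series_left {r1 r2 : ι → ι → Prop} {N1 N2 : Finset ι} {L : List ι}
    (hresp : RespectsOrder (seriesRel r1 r2 N1 N2) L) (hsub : ∀ x ∈ L, x ∈ N1) :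
    RespectsOrder r1 L := fun i j hr hi hj =>
  hresp i j (Or.inl ⟨hsub i hi, hsub j hj, hr⟩) hi hj

lemma resp_of_series_right {r1 r2 : ι → ι → Prop} {N1 N2 : Finset ι} {L : List ι}
    (hresp : RespectsOrder (seriesRel r1 r2 N1 N2) L) (hsub : ∀ x ∈ L, x ∈ N2) :
    RespectsOrder r2 L := fun i j hr hi hj =>
  hresp i j (Or.inr (Or.inl ⟨hsub i hi, hsub j hj, hr⟩)) hi hj

lemma series_split {r1 r2 : ι → ι → Prop} {N1 N2 : Finset ι} (hd : Disjoint N1 N2) :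
    ∀ {T : List ι}, T.Nodup → (∀ x ∈ T, x ∈ N1 ∪ N2) →
    RespectsOrder (seriesRel r1 r2 N1 N2) T →
    T = T.filter (fun x => decide (x ∈ N1)) ++ T.filter (fun x => decide (x ∈ N2)) := by
  intro T
  induction T with
  | nil => intro _ _ _; rfl
  | cons x t ih =>
      intro hnodup hsub hresp
      have htresp : RespectsOrder (seriesRel r1 r2 N1 N2) t :=
        resp_of_suffix (P := [x]) hnodup hresp
      by_cases hx1 : x ∈ N1
      · have hx2 : x ∉ N2 := Finset.disjoint_left.mp hd hx1
        rw [filter_cons_of_pos (by simpa using hx1), filter_cons_of_neg (by simpa using hx2)]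
        rw [cons_append]
        congr 1
        exact ih (nodup_cons.mp hnodup).2 (fun y hy => hsub y (mem_cons_of_mem _ hy)) htresp
      · have hx2 : x ∈ N2 := by
          have := hsub x (mem_cons_self)
          rw [Finset.mem_union] at this
          tauto
        have ht1 : t.filter (fun y => decide (y ∈ N1)) = [] := by
          rw [List.filter_eq_nil_iff]
          intro y hy
          simp only [decide_eq_true_eq]
          intro hyN1
          exact (respectsOrder_iff_splits hnodup).mp hresp [x] t rfl x
            (mem_cons_self) y hy (Or.inr (Or.inr ⟨hyN1, hx2⟩))
        have ht2 : t.filter (fun y => decide (y ∈ N2)) = t := by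
          rw [List.filter_eq_self]
          intro y hy
          simp only [decide_eq_true_eq]
          have hyU := hsub y (mem_cons_of_mem _ hy)
          rw [Finset.mem_union] at hyU
          rcases hyU with h1 | h1
          · exfalso
            have : y ∈ t.filter (fun y => decide (y ∈ N1)) := by
              rw [List.mem_filter]
              exact ⟨hy, by simpa using h1⟩
            rw [ht1] at this
            simp at this
          · exact h1
        rw [filter_cons_of_neg (by simpa using hx1), filter_cons_of_pos (by simpa using hx2),
          ht1, ht2]
        rfl
end Part8

theorem placeholder_done : True := trivial


theorem series_concat_optimal (r1 r2 : ι → ι → Prop)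
    (h1 : IsPartialOrder ι r1) (h2 : IsPartialOrder ι r2)
    (c : ι → ℝ) (N1 N2 : Finset ι) (hd : Disjoint N1 N2)
    (SS1 SS2 : List (List ι))
    (hS1 : IncIrrStructure r1 c N1 SS1) (hS2 : IncIrrStructure r2 c N2 SS2) :
    IsScheduleOf (N1 ∪ N2) (SS1.flatten ++ SS2.flatten) ∧
    RespectsOrder (seriesRel r1 r2 N1 N2) (SS1.flatten ++ SS2.flatten) ∧
    listBudget c (SS1.flatten ++ SS2.flatten) = setBudget (seriesRel r1 r2 N1 N2) c (N1 ∪ N2) := by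
  classical
  obtain ⟨gs1, hN1⟩ := gs_of_inc hS1
  obtain ⟨gs2, hN2⟩ := gs_of_inc hS2
  set F1 := SS1.flatten with hF1def
  set F2 := SS2.flatten with hF2def
  have hSched1 : IsScheduleOf N1 F1 := hS1.1
  have hSched2 : IsScheduleOf N2 F2 := hS2.1
  have hdisjF : List.Disjoint F1 F2 := by
    intro a ha1 ha2
    exact Finset.disjoint_left.mp hd ((hSched1.2 a).mp ha1) ((hSched2.2 a).mp ha2)
  have hnodup : (F1 ++ F2).Nodup := nodup_append'.mpr ⟨hSched1.1, hSched2.1, hdisjF⟩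
  have hC1 : IsScheduleOf (N1 ∪ N2) (F1 ++ F2) := by
    refine ⟨hnodup, fun j => ?_⟩
    rw [mem_append, Finset.mem_union, hSched1.2 j, hSched2.2 j]
  have hC2 : RespectsOrder (seriesRel r1 r2 N1 N2) (F1 ++ F2) := by
    intro i j hij hi hj
    rcases hij with ⟨hi1, hj1, hr⟩ | ⟨hi2, hj2, hr⟩ | ⟨hi1, hj2⟩
    · have hiF : i ∈ F1 := (hSched1.2 i).mpr hi1
      have hjF : j ∈ F1 := (hSched1.2 j).mpr hj1
      rw [idxOf_append_left hiF, idxOf_append_left hjF]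
      exact hS1.2.1 i j hr hiF hjF
    · have hiF : i ∈ F2 := (hSched2.2 i).mpr hi2
      have hjF : j ∈ F2 := (hSched2.2 j).mpr hj2
      have hiF1 : i ∉ F1 := fun h => hdisjF h hiF
      have hjF1 : j ∉ F1 := fun h => hdisjF h hjF
      rw [idxOf_append_right hiF1, idxOf_append_right hjF1]
      exact Nat.add_le_add_left (hS2.2.1 i j hr hiF hjF) _
    · have hiF : i ∈ F1 := (hSched1.2 i).mpr hi1
      have hjF1 : j ∉ F1 := fun h => Finset.disjoint_left.mp hd ((hSched1.2 j).mp h) hj2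
      rw [idxOf_append_left hiF, idxOf_append_right hjF1]
      have := List.idxOf_lt_length_iff.mpr hiF
      omega
  refine ⟨hC1, hC2, ?_⟩
  apply _root_.le_antisymm
  · -- lower bound over all feasible schedules of the series composition
    have hne : {b | ∃ S : List ι, IsScheduleOf (N1 ∪ N2) S ∧
        RespectsOrder (seriesRel r1 r2 N1 N2) S ∧ listBudget c S = b}.Nonempty :=
      ⟨_, F1 ++ F2, hC1, hC2, rfl⟩
    apply le_csInf hne
    rintro b ⟨T, hT, hTresp, rfl⟩
    have hTsub : ∀ x ∈ T, x ∈ N1 ∪ N2 := fun x hx => (hT.2 x).mp hx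
    have hsplit := series_split hd hT.1 hTsub hTresp
    set T1 := T.filter (fun x => decide (x ∈ N1)) with hT1def
    set T2 := T.filter (fun x => decide (x ∈ N2)) with hT2def
    have hT1mem : ∀ x, x ∈ T1 ↔ x ∈ N1 := by
      intro x
      rw [hT1def, List.mem_filter]
      simp only [decide_eq_true_eq]
      exact ⟨fun h => h.2, fun h => ⟨(hT.2 x).mpr (Finset.mem_union_left _ h), h⟩⟩
    have hT2mem : ∀ x, x ∈ T2 ↔ x ∈ N2 := by
      intro x
      rw [hT2def, List.mem_filter]
      simp only [decide_eq_true_eq]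
      exact ⟨fun h => h.2, fun h => ⟨(hT.2 x).mpr (Finset.mem_union_right _ h), h⟩⟩
    have hT1sched : IsScheduleOf SS1.flatten.toFinset T1 :=
      ⟨hT.1.filter _, fun j => by rw [hN1]; exact hT1mem j⟩
    have hT2sched : IsScheduleOf SS2.flatten.toFinset T2 :=
      ⟨hT.1.filter _, fun j => by rw [hN2]; exact hT2mem j⟩
    have hT1resp : RespectsOrder r1 T1 :=
      resp_of_series_left (resp_filter hT.1 hTresp _) (fun x hx => (hT1mem x).mp hx)
    have hT2resp : RespectsOrder r2 T2 :=
      resp_of_series_right (resp_filter hT.1 hTresp _) (fun x hx => (hT2mem x).mp hx)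
    have hb1 : listBudget c F1 ≤ listBudget c T1 := thmA gs1 hT1sched hT1resp
    have hb2 : listBudget c F2 ≤ listBudget c T2 := thmA gs2 hT2sched hT2resp
    have hc1 : listCost c F1 = listCost c T1 := by
      rw [setCost_of_schedule hSched1.1 hSched1.2 c,
        setCost_of_schedule (hT.1.filter _) hT1mem c]
    calc listBudget c (F1 ++ F2)
        = max (listBudget c F1) (listCost c F1 + listBudget c F2) := listBudget_append c F1 F2
      _ ≤ max (listBudget c T1) (listCost c T1 + listBudget c T2) := by
          apply max_le_max hb1
          rw [hc1]
          linarith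
      _ = listBudget c (T1 ++ T2) := (listBudget_append c T1 T2).symm
      _ = listBudget c T := by rw [← hsplit]
  · exact csInf_le ⟨0, fun b hb => budgetSet_nonneg hb⟩ ⟨F1 ++ F2, hC1, hC2, rfl⟩
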